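/- Set V = P^D_{𝒯^{⊥_D}} Z. Then VᵀDV is invertible and Cᵀ P^D_ℋ D⁻¹ C = CᵀV(VᵀDV)⁻¹VᵀC. -/

import Mathlib

open Matrix BigOperators

noncomputable section

/-- Cells `(j,k)` of a `(J+1) × (K+1)` contingency table. -/
abbrev Cell (J K : ℕ) := Fin (J + 1) × Fin (K + 1)

/-- Standard unit vector `e_{jk}` in `ℝ^I`. -/
def eV {J K : ℕ} (c : Cell J K) : Cell J K → ℝ := Pi.single c 1

/-- Row-sum vector `e_{j+} = Σ_k e_{jk}`. -/
def eRow {J K : ℕ} (j : Fin (J + 1)) : Cell J K → ℝ := ∑ k : Fin (K + 1), eV (j, k)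

/-- Column-sum vector `e_{+k} = Σ_j e_{jk}`. -/
def eCol {J K : ℕ} (k : Fin (K + 1)) : Cell J K → ℝ := ∑ j : Fin (J + 1), eV (j, k)

/-- The all-ones vector `e_{++}`. -/
def eAll (J K : ℕ) : Cell J K → ℝ := ∑ j : Fin (J + 1), ∑ k : Fin (K + 1), eV (j, k)

/-- The row space `ℛ = span{e_{0+},…,e_{J+}}`. -/
def rowSpace (J K : ℕ) : Submodule ℝ (Cell J K → ℝ) :=
  Submodule.span ℝ (Set.range (eRow (J := J) (K := K)))

/-- The column space `𝒞 = span{e_{+0},…,e_{+K}}`. -/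
def colSpace (J K : ℕ) : Submodule ℝ (Cell J K → ℝ) :=
  Submodule.span ℝ (Set.range (eCol (J := J) (K := K)))

/-- The diagonal space `𝒟 = span{e_{++}}`. -/
def diagSpace (J K : ℕ) : Submodule ℝ (Cell J K → ℝ) :=
  Submodule.span ℝ {eAll J K}

/-- The marginal space `𝒯 = ℛ + 𝒞`. -/
def margSpace (J K : ℕ) : Submodule ℝ (Cell J K → ℝ) := rowSpace J K ⊔ colSpace J K

/-- `P` is the `D`-orthogonal projection matrix onto the subspace `S`:
`P x ∈ S` and `x - P x` is `D`-orthogonal to `S`, for every `x`. -/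
def IsProjD {J K : ℕ} (D : Matrix (Cell J K) (Cell J K) ℝ) (S : Submodule ℝ (Cell J K → ℝ))
    (P : Matrix (Cell J K) (Cell J K) ℝ) : Prop :=
  ∀ x, P.mulVec x ∈ S ∧ ∀ s ∈ S, (x - P.mulVec x) ⬝ᵥ D.mulVec s = 0

/-- The `D`-orthogonal complement of a subspace `S`. -/
def perpD {J K : ℕ} (D : Matrix (Cell J K) (Cell J K) ℝ) (S : Submodule ℝ (Cell J K → ℝ)) :
    Submodule ℝ (Cell J K → ℝ) where
  carrier := {x | ∀ t ∈ S, x ⬝ᵥ D.mulVec t = 0}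
  add_mem' := by
    intro a b ha hb t ht
    simp only [Set.mem_setOf_eq] at *
    simp [add_dotProduct, ha t ht, hb t ht]
  zero_mem' := by
    intro t ht
    simp
  smul_mem' := by
    intro c a ha t ht
    simp only [Set.mem_setOf_eq] at *
    simp [smul_dotProduct, ha t ht]

/-- The vector `c_{jk} = e_{jk} + e_{00} - e_{j0} - e_{0k}` (for `1 ≤ j`, `1 ≤ k`). -/
def cVec {J K : ℕ} (j : Fin J) (k : Fin K) : Cell J K → ℝ :=
  eV (j.succ, k.succ) + eV (0, 0) - eV (j.succ, 0) - eV (0, k.succ)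

/-- The `I × (JK)` matrix `C` with columns `c_{jk}`. -/
def Cmat (J K : ℕ) : Matrix (Cell J K) (Fin J × Fin K) ℝ :=
  fun i jk => cVec jk.1 jk.2 i

/-- The vector `b_k = e_{0k} - e_{00}` (for `1 ≤ k`). -/
def bVec {J K : ℕ} (k : Fin K) : Cell J K → ℝ :=
  eV ((0 : Fin (J + 1)), k.succ) - eV (0, 0)

/-- The `I × K` matrix `B` with columns `b_k`. -/
def Bmat (J K : ℕ) : Matrix (Cell J K) (Fin K) ℝ :=
  fun i k => bVec k i

/-- The `I × K` matrix `E` with columns `e_{+1},…,e_{+K}`. -/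
def Emat (J K : ℕ) : Matrix (Cell J K) (Fin K) ℝ :=
  fun i k => eCol k.succ i

/-- Column space of a matrix. -/
def colSpan {m n : Type*} [Fintype n] (A : Matrix m n ℝ) : Submodule ℝ (m → ℝ) :=
  Submodule.span ℝ (Set.range fun j => fun i => A i j)

/-- The reduced `(JK) × L` covariate matrix `Z°` with rows `z_{jk}ᵀ`, `j,k ≥ 1`. -/
def Zred {J K : ℕ} {L : Type*} (Z : Matrix (Cell J K) L ℝ) : Matrix (Fin J × Fin K) L ℝ :=
  fun jk => Z (jk.1.succ, jk.2.succ)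

/-- The model space `ℋ = 𝒯 + col(Z)` of the log-linear model
`η_{jk} = α + ρ_j + γ_k + z_{jk}ᵀ θ`. -/
def modelSpace {J K : ℕ} {L : Type*} [Fintype L] (Z : Matrix (Cell J K) L ℝ) :
    Submodule ℝ (Cell J K → ℝ) :=
  margSpace J K ⊔ colSpan Z

end
section Helpers

open Matrix

variable {J K : ℕ}

lemma dot_eV (c : Cell J K) (t : Cell J K → ℝ) : eV c ⬝ᵥ t = t c := by
  simp [eV, dotProduct, Pi.single_apply]

lemma margSpace_rep {t : Cell J K → ℝ} (ht : t ∈ margSpace J K) :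
    ∃ ρ : Fin (J+1) → ℝ, ∃ γ : Fin (K+1) → ℝ, ∀ a b, t (a, b) = ρ a + γ b := by
  rw [margSpace, Submodule.mem_sup] at ht
  obtain ⟨r, hr, c, hc, rfl⟩ := ht
  rw [rowSpace, Submodule.mem_span_range_iff_exists_fun] at hr
  rw [colSpace, Submodule.mem_span_range_iff_exists_fun] at hc
  obtain ⟨ρ, hρ⟩ := hr
  obtain ⟨γ, hγ⟩ := hc
  refine ⟨ρ, γ, fun a b => ?_⟩
  have h1 : r (a, b) = ρ a := by
    rw [← hρ]
    simp [eRow, eV, Finset.sum_apply, Pi.single_apply, Prod.ext_iff, ite_and, Finset.sum_ite_eq]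
  have h2 : c (a, b) = γ b := by
    rw [← hγ]
    simp [eCol, eV, Finset.sum_apply, Pi.single_apply, Prod.ext_iff, ite_and, Finset.sum_ite_eq]
  simp [h1, h2]

lemma cVec_dot_marg {t : Cell J K → ℝ} (ht : t ∈ margSpace J K) (j : Fin J) (k : Fin K) :
    cVec j k ⬝ᵥ t = 0 := by
  obtain ⟨ρ, γ, h⟩ := margSpace_rep ht
  simp only [cVec, add_dotProduct, sub_dotProduct, dot_eV, h]
  ring

lemma marg_eq_zero {t : Cell J K → ℝ} (ht : t ∈ margSpace J K)
    (h0 : ∀ j, t (j, 0) = 0) (h0' : ∀ k, t (0, k) = 0) : t = 0 := by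
  obtain ⟨ρ, γ, h⟩ := margSpace_rep ht
  funext c
  obtain ⟨a, b⟩ := c
  have e1 := h a 0
  have e2 := h 0 b
  have e3 := h 0 0
  rw [h0 a] at e1
  rw [h0' b] at e2
  rw [h0 0] at e3
  have := h a b
  simp only [Pi.zero_apply]
  linarith [h a b]

end Helpers
section Helpers2

open Matrix

variable {J K : ℕ} {μ : Cell J K → ℝ}

lemma dotD_eq (a b : Cell J K → ℝ) :
    a ⬝ᵥ (Matrix.diagonal μ) *ᵥ b = ∑ i, μ i * a i * b i := by
  simp only [dotProduct, Matrix.mulVec_diagonal]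
  exact Finset.sum_congr rfl fun i _ => by ring

lemma dotD_comm (a b : Cell J K → ℝ) :
    a ⬝ᵥ (Matrix.diagonal μ) *ᵥ b = b ⬝ᵥ (Matrix.diagonal μ) *ᵥ a := by
  rw [dotD_eq, dotD_eq]
  exact Finset.sum_congr rfl fun i _ => by ring

lemma dotD_self_zero (hμ : ∀ i, 0 < μ i) {x : Cell J K → ℝ}
    (h : x ⬝ᵥ (Matrix.diagonal μ) *ᵥ x = 0) : x = 0 := by
  rw [dotD_eq] at h
  have hnn : ∀ i ∈ Finset.univ, 0 ≤ μ i * x i * x i := fun i _ => by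
    rw [mul_assoc]; exact mul_nonneg (hμ i).le (mul_self_nonneg _)
  rw [Finset.sum_eq_zero_iff_of_nonneg hnn] at h
  funext i
  have h' := h i (Finset.mem_univ i)
  rw [mul_assoc] at h'
  rcases mul_eq_zero.mp h' with h'' | h''
  · exact absurd h'' (hμ i).ne'
  · simpa [Pi.zero_apply] using mul_self_eq_zero.mp h''

/-- The weighted isometry to Euclidean space. -/
noncomputable def phiD (μ : Cell J K → ℝ) (hμ : ∀ i, 0 < μ i) :
    (Cell J K → ℝ) ≃ₗ[ℝ] EuclideanSpace ℝ (Cell J K) where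
  toFun x := WithLp.toLp 2 (fun i => Real.sqrt (μ i) * x i)
  invFun y := fun i => y i / Real.sqrt (μ i)
  map_add' x y := by ext i; simp [mul_add]
  map_smul' c x := by ext i; simp; ring
  left_inv x := by
    funext i
    have h : Real.sqrt (μ i) ≠ 0 := Real.sqrt_ne_zero'.mpr (hμ i)
    simp
    field_simp
  right_inv y := by
    ext i
    have h : Real.sqrt (μ i) ≠ 0 := Real.sqrt_ne_zero'.mpr (hμ i)
    simp
    field_simp

lemma inner_phiD (hμ : ∀ i, 0 < μ i) (t x : Cell J K → ℝ) :
    (inner ℝ (phiD μ hμ t) (phiD μ hμ x) : ℝ) = x ⬝ᵥ (Matrix.diagonal μ) *ᵥ t := by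
  rw [dotD_eq]
  rw [PiLp.inner_apply]
  refine Finset.sum_congr rfl fun i _ => ?_
  rw [RCLike.inner_apply']
  have hφ : ∀ z : Cell J K → ℝ, (phiD μ hμ z) i = Real.sqrt (μ i) * z i := fun z => rfl
  rw [hφ, hφ]
  simp only [starRingEnd_apply, star_trivial]
  rw [mul_mul_mul_comm, Real.mul_self_sqrt (hμ i).le]
  ring

lemma mem_perpD_iff (hμ : ∀ i, 0 < μ i) (S : Submodule ℝ (Cell J K → ℝ)) (x : Cell J K → ℝ) :
    x ∈ perpD (Matrix.diagonal μ) S ↔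
      phiD μ hμ x ∈ (S.map (phiD μ hμ).toLinearMap)ᗮ := by
  rw [Submodule.mem_orthogonal]
  constructor
  · rintro hx u ⟨t, ht, rfl⟩
    rw [LinearEquiv.coe_coe, inner_phiD hμ]
    exact hx t ht
  · intro hx t ht
    have := hx (phiD μ hμ t) ⟨t, ht, rfl⟩
    rw [inner_phiD hμ] at this
    exact this

lemma perpD_eq (hμ : ∀ i, 0 < μ i) (S : Submodule ℝ (Cell J K → ℝ)) :
    perpD (Matrix.diagonal μ) S =
      ((S.map (phiD μ hμ).toLinearMap)ᗮ).comap (phiD μ hμ).toLinearMap := by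
  ext x
  rw [Submodule.mem_comap]
  exact mem_perpD_iff hμ S x

lemma perpD_perpD (hμ : ∀ i, 0 < μ i) (S : Submodule ℝ (Cell J K → ℝ)) :
    perpD (Matrix.diagonal μ) (perpD (Matrix.diagonal μ) S) = S := by
  rw [perpD_eq hμ, perpD_eq hμ]
  have h1 : ∀ T : Submodule ℝ (EuclideanSpace ℝ (Cell J K)),
      Submodule.map (phiD μ hμ).toLinearMap (Submodule.comap (phiD μ hμ).toLinearMap T) = T :=
    fun T => Submodule.map_comap_eq_of_surjective (phiD μ hμ).surjective T
  have h2 : ∀ T : Submodule ℝ (Cell J K → ℝ),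
      Submodule.comap (phiD μ hμ).toLinearMap (Submodule.map (phiD μ hμ).toLinearMap T) = T :=
    fun T => Submodule.comap_map_eq_of_injective (phiD μ hμ).injective T
  rw [h1, Submodule.orthogonal_orthogonal, h2]

end Helpers2
section Helpers3

open Matrix

variable {J K : ℕ} {μ : Cell J K → ℝ}

lemma isProjD_unique (hμ : ∀ i, 0 < μ i) {S : Submodule ℝ (Cell J K → ℝ)}
    {P₁ P₂ : Matrix (Cell J K) (Cell J K) ℝ}
    (h₁ : IsProjD (Matrix.diagonal μ) S P₁) (h₂ : IsProjD (Matrix.diagonal μ) S P₂) :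
    P₁ = P₂ := by
  have key : ∀ x, P₁ *ᵥ x = P₂ *ᵥ x := by
    intro x
    have hd : P₁ *ᵥ x - P₂ *ᵥ x ∈ S := Submodule.sub_mem S (h₁ x).1 (h₂ x).1
    have e : P₁ *ᵥ x - P₂ *ᵥ x = (x - P₂ *ᵥ x) - (x - P₁ *ᵥ x) := by abel
    have hz : (P₁ *ᵥ x - P₂ *ᵥ x) ⬝ᵥ (Matrix.diagonal μ) *ᵥ (P₁ *ᵥ x - P₂ *ᵥ x) = 0 := by
      nth_rewrite 1 [e]
      rw [sub_dotProduct, (h₂ x).2 _ hd, (h₁ x).2 _ hd, sub_zero]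
    have := dotD_self_zero hμ hz
    exact sub_eq_zero.mp this
  ext i j
  have := congrFun (key (Pi.single j 1)) i
  simpa using this

lemma mulVec_mem_colSpan {m n : Type*} [Fintype n] [Fintype m]
    (A : Matrix m n ℝ) (w : n → ℝ) : A *ᵥ w ∈ colSpan A := by
  rw [colSpan, Submodule.mem_span_range_iff_exists_fun]
  refine ⟨w, ?_⟩
  funext i
  simp [Matrix.mulVec, dotProduct, Finset.sum_apply, mul_comm]

lemma colSpan_mem {m n : Type*} [Fintype n] [Fintype m]
    {A : Matrix m n ℝ} {s : m → ℝ} (hs : s ∈ colSpan A) : ∃ w, s = A *ᵥ w := by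
  rw [colSpan, Submodule.mem_span_range_iff_exists_fun] at hs
  obtain ⟨w, hw⟩ := hs
  refine ⟨w, ?_⟩
  rw [← hw]
  funext i
  simp [Matrix.mulVec, dotProduct, Finset.sum_apply, mul_comm]

/-- key dot-product algebra: `(V a) ⬝ D (V w) = a ⬝ (VᵀDV) w`. -/
lemma dot_VDV {L : ℕ} (V : Matrix (Cell J K) (Fin L) ℝ) (a w : Fin L → ℝ) :
    (V *ᵥ a) ⬝ᵥ (Matrix.diagonal μ) *ᵥ (V *ᵥ w) =
      a ⬝ᵥ (Vᵀ * Matrix.diagonal μ * V) *ᵥ w := by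
  rw [← Matrix.mulVec_mulVec, ← Matrix.mulVec_mulVec, Matrix.dotProduct_mulVec (v := a),
    Matrix.vecMul_transpose, Matrix.dotProduct_mulVec, Matrix.dotProduct_mulVec]

lemma rank_eq_mulVec_injective {m : Type*} [Fintype m] {L : ℕ}
    (A : Matrix m (Fin L) ℝ) (h : A.rank = L) : Function.Injective A.mulVec := by
  have hrn := LinearMap.finrank_range_add_finrank_ker A.mulVecLin
  rw [Matrix.rank] at h
  rw [h, Module.finrank_pi] at hrn
  simp only [Fintype.card_fin] at hrn
  have hker : Module.finrank ℝ (LinearMap.ker A.mulVecLin) = 0 := by omega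
  have : LinearMap.ker A.mulVecLin = ⊥ := Submodule.finrank_eq_zero.mp hker
  have hinj : Function.Injective A.mulVecLin := LinearMap.ker_eq_bot.mp this
  exact hinj

end Helpers3
/-- with `V = P^D_{𝒯^{⊥_D}} Z`, the matrix `VᵀDV` is invertible and
`Cᵀ P^D_ℋ D⁻¹ C = CᵀV(VᵀDV)⁻¹VᵀC`. -/
theorem CtPHDinvC_representation
    {J K L : ℕ} (hJ : 1 ≤ J) (hK : 1 ≤ K) (hL : 1 ≤ L)
    (μ : Cell J K → ℝ) (hμ : ∀ i, 0 < μ i)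
    (Z : Matrix (Cell J K) (Fin L) ℝ)
    (hZrow : ∀ j, Z (j, 0) = 0) (hZcol : ∀ k, Z (0, k) = 0)
    (hZrank : (Zred Z).rank = L)
    (PH : Matrix (Cell J K) (Cell J K) ℝ)
    (hPH : IsProjD (Matrix.diagonal μ) (modelSpace Z) PH)
    (PTperp : Matrix (Cell J K) (Cell J K) ℝ)
    (hPTperp : IsProjD (Matrix.diagonal μ) (perpD (Matrix.diagonal μ) (margSpace J K)) PTperp)
    (V : Matrix (Cell J K) (Fin L) ℝ) (hV : V = PTperp * Z) :
    IsUnit (Vᵀ * Matrix.diagonal μ * V) ∧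
    (Cmat J K)ᵀ * PH * (Matrix.diagonal μ)⁻¹ * Cmat J K =
      (Cmat J K)ᵀ * V * (Vᵀ * Matrix.diagonal μ * V)⁻¹ * Vᵀ * Cmat J K := by
  classical
  have hDdet : IsUnit (Matrix.diagonal μ).det := by
    rw [Matrix.det_diagonal]
    exact isUnit_iff_ne_zero.mpr (Finset.prod_ne_zero_iff.mpr fun i _ => (hμ i).ne')
  have hNsymm : (Vᵀ * Matrix.diagonal μ * V)ᵀ = Vᵀ * Matrix.diagonal μ * V := by
    rw [Matrix.transpose_mul, Matrix.transpose_mul, Matrix.transpose_transpose,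
      Matrix.diagonal_transpose, Matrix.mul_assoc]
  -- residual of PTperp lands in the marginal space
  have hmarg : ∀ x, x - PTperp *ᵥ x ∈ margSpace J K := by
    intro x
    have h : x - PTperp *ᵥ x ∈ perpD (Matrix.diagonal μ) (perpD (Matrix.diagonal μ) (margSpace J K)) :=
      (hPTperp x).2
    rwa [perpD_perpD hμ] at h
  have hVeq : ∀ w, V *ᵥ w = PTperp *ᵥ (Z *ᵥ w) := by
    intro w
    rw [hV, ← Matrix.mulVec_mulVec]
  have hVperp : ∀ w, V *ᵥ w ∈ perpD (Matrix.diagonal μ) (margSpace J K) := by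
    intro w
    rw [hVeq]
    exact (hPTperp (Z *ᵥ w)).1
  -- V has trivial kernel
  have hVker : ∀ y : Fin L → ℝ, V *ᵥ y = 0 → y = 0 := by
    intro y hy
    have hZy : Z *ᵥ y ∈ margSpace J K := by
      have h := hmarg (Z *ᵥ y)
      rw [← hVeq, hy, sub_zero] at h
      exact h
    have hZ0 : Z *ᵥ y = 0 := by
      refine marg_eq_zero hZy (fun j => ?_) (fun k => ?_)
      · show Z (j, 0) ⬝ᵥ y = 0
        rw [hZrow j, zero_dotProduct]
      · show Z (0, k) ⬝ᵥ y = 0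
        rw [hZcol k, zero_dotProduct]
    have hZred : (Zred Z) *ᵥ y = (Zred Z) *ᵥ 0 := by
      funext jk
      have h := congrFun hZ0 (jk.1.succ, jk.2.succ)
      simp only [Matrix.mulVec_zero, Pi.zero_apply]
      exact h
    exact rank_eq_mulVec_injective _ hZrank hZred
  -- invertibility of N = VᵀDV
  have hNinj : Function.Injective (Vᵀ * Matrix.diagonal μ * V).mulVec := by
    intro y y' hyy
    have hd : (Vᵀ * Matrix.diagonal μ * V) *ᵥ (y - y') = 0 := by
      rw [Matrix.mulVec_sub, hyy, sub_self]
    have h0 : (V *ᵥ (y - y')) ⬝ᵥ (Matrix.diagonal μ) *ᵥ (V *ᵥ (y - y')) = 0 := by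
      rw [dot_VDV, hd, dotProduct_zero]
    exact sub_eq_zero.mp (hVker _ (dotD_self_zero hμ h0))
  have hNunit : IsUnit (Vᵀ * Matrix.diagonal μ * V) :=
    Matrix.mulVec_injective_iff_isUnit.mp hNinj
  have hNdet : IsUnit (Vᵀ * Matrix.diagonal μ * V).det :=
    (Matrix.isUnit_iff_isUnit_det _).mp hNunit
  refine ⟨hNunit, ?_⟩
  -- the candidate projection onto the model space
  have hassoc : V * (Vᵀ * Matrix.diagonal μ * V)⁻¹ * Vᵀ * Matrix.diagonal μ =
      V * ((Vᵀ * Matrix.diagonal μ * V)⁻¹ * Vᵀ * Matrix.diagonal μ) := by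
    simp only [Matrix.mul_assoc]
  have hQx : ∀ x, (V * (Vᵀ * Matrix.diagonal μ * V)⁻¹ * Vᵀ * Matrix.diagonal μ
        + (1 - PTperp)) *ᵥ x
      = V *ᵥ (((Vᵀ * Matrix.diagonal μ * V)⁻¹ * Vᵀ * Matrix.diagonal μ) *ᵥ x)
        + (x - PTperp *ᵥ x) := by
    intro x
    rw [Matrix.add_mulVec, Matrix.sub_mulVec, Matrix.one_mulVec, hassoc,
      Matrix.mulVec_mulVec]
  have hVinH : ∀ w, V *ᵥ w ∈ modelSpace Z := by
    intro w
    have h1 : Z *ᵥ w ∈ modelSpace Z := Submodule.mem_sup_right (mulVec_mem_colSpan Z w)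
    have h2 : Z *ᵥ w - V *ᵥ w ∈ modelSpace Z := by
      refine Submodule.mem_sup_left ?_
      rw [hVeq]
      exact hmarg (Z *ᵥ w)
    have h3 : V *ᵥ w = Z *ᵥ w - (Z *ᵥ w - V *ᵥ w) := by abel
    rw [h3]
    exact Submodule.sub_mem _ h1 h2
  have hQproj : IsProjD (Matrix.diagonal μ) (modelSpace Z)
      (V * (Vᵀ * Matrix.diagonal μ * V)⁻¹ * Vᵀ * Matrix.diagonal μ + (1 - PTperp)) := by
    intro x
    constructor
    · rw [hQx]
      exact Submodule.add_mem _ (hVinH _) (Submodule.mem_sup_left (hmarg x))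
    · intro s hs
      have hres : x - (V * (Vᵀ * Matrix.diagonal μ * V)⁻¹ * Vᵀ * Matrix.diagonal μ
            + (1 - PTperp)) *ᵥ x
          = PTperp *ᵥ x
            - V *ᵥ (((Vᵀ * Matrix.diagonal μ * V)⁻¹ * Vᵀ * Matrix.diagonal μ) *ᵥ x) := by
        rw [hQx]; abel
      have hrperp : x - (V * (Vᵀ * Matrix.diagonal μ * V)⁻¹ * Vᵀ * Matrix.diagonal μ
            + (1 - PTperp)) *ᵥ x ∈ perpD (Matrix.diagonal μ) (margSpace J K) := by
        rw [hres]
        exact Submodule.sub_mem _ (hPTperp x).1 (hVperp _)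
      rw [modelSpace, Submodule.mem_sup] at hs
      obtain ⟨t, ht, z, hz, rfl⟩ := hs
      obtain ⟨w, rfl⟩ := colSpan_mem hz
      rw [Matrix.mulVec_add, dotProduct_add, hrperp t ht, zero_add]
      have hsplit : Z *ᵥ w = V *ᵥ w + (Z *ᵥ w - V *ᵥ w) := by abel
      have ht' : Z *ᵥ w - V *ᵥ w ∈ margSpace J K := by
        rw [hVeq]; exact hmarg (Z *ᵥ w)
      rw [hsplit, Matrix.mulVec_add, dotProduct_add, hrperp _ ht', add_zero]
      -- main cancellation
      have claimA : (PTperp *ᵥ x) ⬝ᵥ (Matrix.diagonal μ) *ᵥ (V *ᵥ w)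
          = x ⬝ᵥ (Matrix.diagonal μ) *ᵥ (V *ᵥ w) := by
        have h := hVperp w (x - PTperp *ᵥ x) (hmarg x)
        rw [← dotD_comm, sub_dotProduct] at h
        linarith
      have claimB : (V *ᵥ (((Vᵀ * Matrix.diagonal μ * V)⁻¹ * Vᵀ * Matrix.diagonal μ) *ᵥ x))
            ⬝ᵥ (Matrix.diagonal μ) *ᵥ (V *ᵥ w)
          = x ⬝ᵥ (Matrix.diagonal μ) *ᵥ (V *ᵥ w) := by
        rw [dot_VDV, Matrix.dotProduct_mulVec]
        have hvm : (((Vᵀ * Matrix.diagonal μ * V)⁻¹ * Vᵀ * Matrix.diagonal μ) *ᵥ x)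
              ᵥ* (Vᵀ * Matrix.diagonal μ * V)
            = Vᵀ *ᵥ ((Matrix.diagonal μ) *ᵥ x) := by
          rw [← hNsymm, Matrix.vecMul_transpose, hNsymm, Matrix.mulVec_mulVec,
            ← Matrix.mul_assoc, ← Matrix.mul_assoc,
            Matrix.mul_nonsing_inv _ hNdet, Matrix.one_mul, ← Matrix.mulVec_mulVec]
        rw [hvm, Matrix.mulVec_transpose, ← Matrix.dotProduct_mulVec, dotProduct_comm,
          dotD_comm]
      rw [hres, sub_dotProduct, claimA, claimB, sub_self]
  have hPHQ : PH = V * (Vᵀ * Matrix.diagonal μ * V)⁻¹ * Vᵀ * Matrix.diagonal μ + (1 - PTperp) :=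
    isProjD_unique hμ hPH hQproj
  -- Cᵀ annihilates (1 - PTperp)
  have hCt : (Cmat J K)ᵀ * (1 - PTperp) = 0 := by
    ext p i
    rw [Matrix.mul_apply, Matrix.zero_apply]
    have hmem : (1 - PTperp) *ᵥ Pi.single i 1 ∈ margSpace J K := by
      rw [Matrix.sub_mulVec, Matrix.one_mulVec]
      exact hmarg _
    have hdot := cVec_dot_marg hmem p.1 p.2
    rw [dotProduct] at hdot
    rw [← hdot]
    refine Finset.sum_congr rfl fun r _ => ?_
    simp [Cmat, Matrix.transpose_apply, Matrix.mulVec_single]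
  rw [hPHQ, Matrix.mul_add, Matrix.add_mul, Matrix.add_mul, hCt, Matrix.zero_mul,
    Matrix.zero_mul, add_zero]
  simp only [Matrix.mul_assoc]
  rw [← Matrix.mul_assoc (Matrix.diagonal μ) (Matrix.diagonal μ)⁻¹ (Cmat J K),
    Matrix.mul_nonsing_inv _ hDdet, Matrix.one_mul]
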